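/- [Lemma 3.2] Let c > 0, p ≥ 1, let w : ℤ → ℝ model a cycle with p vertices and circumference c as in the context, and let k ≥ 0 be an integer. Let f₂ be a walk of a route that is the concatenation of k+2 tours starting at some vertex index s₂, where the j-th tour is in an arbitrary direction ε_j ∈ {+1,−1} and starts at the vertex index where the previous tour ended (so every tour starts and ends at an index congruent to s₂ mod p). Let f₁ be a walk of a route that is either the concatenation of a monotone route of at most p steps (a partial tour) followed by at most k tours, or the concatenation of at most k tours followed by a monotone route of at most p steps, each part starting at the vertex index where the preceding part ended. Then f₁ and f₂ meet, i.e., there exists t ∈ [0,1] with f₁(t) − f₂(t) ∈ cℤ. -/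

import Mathlib

/- A cycle with `p ≥ 1` vertices and circumference `c > 0` is modeled via its universal
cover: a strictly increasing `w : ℤ → ℝ` with `w (i + p) = w i + c`; the value `w i` is the
lift of the `i`-th vertex, and two reals represent the same point of the cycle iff their
difference lies in `cℤ`. -/

/-- A walk of the route `q 0, q 1, …, q N` (a sequence of vertex indices with consecutive
indices differing by `1` in absolute value): a continuous `f : [0,1] → ℝ` together with
times `0 = t 0 ≤ t 1 ≤ … ≤ t N = 1` such that `f (t j) = w (q j)` and, on `[t j, t (j+1)]`,
`f` stays in the closed interval with endpoints `w (q j)` and `w (q (j+1))`. -/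
def IsWalk (w : ℤ → ℝ) (N : ℕ) (q : ℕ → ℤ) (f : ℝ → ℝ) : Prop :=
  ContinuousOn f (Set.Icc 0 1) ∧
  ∃ t : ℕ → ℝ, t 0 = 0 ∧ t N = 1 ∧ (∀ j, j < N → t j ≤ t (j + 1)) ∧
    (∀ j, j ≤ N → f (t j) = w (q j)) ∧
    (∀ j, j < N → ∀ s ∈ Set.Icc (t j) (t (j + 1)),
      f s ∈ Set.uIcc (w (q j)) (w (q (j + 1))))

/-- The indices `q m0, …, q (m0 + n * p)` of the route `q` form a concatenation of `n`
tours of the cycle with `p` vertices: the `j`-th tour starts at the vertex index where the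
previous one ended and is the route `s, s + ε, s + 2ε, …, s + εp` for some direction
`ε ∈ {+1, -1}`. -/
def ToursFrom (p : ℕ) (m0 : ℕ) (n : ℕ) (q : ℕ → ℤ) : Prop :=
  ∀ j, j < n → ∃ ε : ℤ, (ε = 1 ∨ ε = -1) ∧
    ∀ i, i ≤ p → q (m0 + j * p + i) = q (m0 + j * p) + ε * i

/-- The indices `q m0, …, q (m0 + M)` form a monotone route: all steps are the same value
`ε ∈ {+1, -1}`. -/
def MonotoneRouteFrom (m0 : ℕ) (M : ℕ) (q : ℕ → ℤ) : Prop :=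
  ∃ ε : ℤ, (ε = 1 ∨ ε = -1) ∧ ∀ i, i ≤ M → q (m0 + i) = q m0 + ε * i
section helpers

private lemma cl_mono' {p : ℕ} (hp : 0 < p) (s₂ : ℤ) (x y : ℤ) (h : x ≤ y) :
    (x - s₂) / (p:ℤ) ≤ (y - s₂) / (p:ℤ) :=
  Int.ediv_le_ediv (by exact_mod_cast hp) (by linarith)

private lemma cl_succ' {p : ℕ} (hp : 0 < p) (s₂ : ℤ) (x : ℤ) :
    (x + (p:ℤ) - s₂) / (p:ℤ) = (x - s₂) / (p:ℤ) + 1 := by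
  have hp0 : (p:ℤ) ≠ 0 := by exact_mod_cast hp.ne'
  have h : x + (p:ℤ) - s₂ = (x - s₂) + 1 * p := by ring
  rw [h, Int.add_mul_ediv_right _ _ hp0]

private lemma cl_le_one' {p : ℕ} (hp : 0 < p) (s₂ : ℤ) (x y : ℤ) (h : y ≤ x + p) :
    (y - s₂) / (p:ℤ) ≤ (x - s₂) / (p:ℤ) + 1 := by
  rw [← cl_succ' hp s₂ x]
  exact cl_mono' hp s₂ _ _ h

private lemma cl_lattice' {p : ℕ} (hp : 0 < p) (s₂ : ℤ) (V x : ℤ) (hd : (p:ℤ) ∣ V - s₂)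
    (h1 : V ≤ x) (h2 : x < V + p) :
    (x - s₂) / (p:ℤ) = (V - s₂) / (p:ℤ) := by
  have hp0 : (p:ℤ) ≠ 0 := by exact_mod_cast hp.ne'
  obtain ⟨a, ha⟩ := hd
  have hx : x - s₂ = (x - V) + a * p := by linear_combination ha
  have hV : V - s₂ = 0 + a * p := by linear_combination ha
  rw [hx, hV, Int.add_mul_ediv_right _ _ hp0, Int.add_mul_ediv_right _ _ hp0,
    Int.ediv_eq_zero_of_lt (by linarith) (by linarith), Int.zero_ediv]

private lemma w_add_mul {p : ℕ} {c : ℝ} (w : ℤ → ℝ) (hwp : ∀ i : ℤ, w (i + p) = w i + c) :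
    ∀ (n : ℤ) (i : ℤ), w (i + n * p) = w i + n * c := by
  intro n
  induction n using Int.induction_on with
  | zero => simp
  | succ n ih =>
    intro i
    have h1 : i + ((n:ℤ) + 1) * p = (i + n * p) + p := by ring
    rw [h1, hwp, ih]
    push_cast; ring
  | pred n ih =>
    intro i
    have h1 : (i + (-(n:ℤ) - 1) * p) + p = i + (-(n:ℤ)) * p := by ring
    have h2 := hwp (i + (-(n:ℤ) - 1) * p)
    rw [h1, ih] at h2
    push_cast at h2 ⊢
    linarith

private lemma exists_change (F : ℕ → ℤ) (a b : ℕ) (hab : a ≤ b) (hne : F a ≠ F b) :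
    ∃ ι, a ≤ ι ∧ ι < b ∧ F ι ≠ F (ι + 1) := by
  by_contra h
  push_neg at h
  apply hne
  have key : ∀ d, a + d ≤ b → F a = F (a + d) := by
    intro d
    induction d with
    | zero => intro _; rfl
    | succ n ih =>
      intro hd
      have h1 := ih (by omega)
      have h2 := h (a + n) (by omega) (by omega)
      calc F a = F (a + n) := h1
        _ = F (a + n + 1) := h2
        _ = F (a + (n + 1)) := by ring_nf
  have h3 := key (b - a) (by omega)
  rw [h3]
  congr 1
  omega

end helpers
private lemma block_bound {p : ℕ} (hp : 0 < p) (s₂ : ℤ) (q : ℕ → ℤ)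
    (S P : ℕ) (hPp : P ≤ p) (ε : ℤ) (hε : ε = 1 ∨ ε = -1)
    (hrun : ∀ i, i ≤ P → q (S + i) = q S + ε * i)
    (hprev : S = 0 ∨ q (S - 1) = q S + 1 ∨ q (S - 1) = q S - 1)
    (i i' : ℕ) (hi1 : S ≤ i + 1) (hii : i < i') (hi2 : i' + 1 ≤ S + P - 1)
    (hc1 : (min (q i) (q (i+1)) - s₂) / (p:ℤ) ≠ (min (q (i+1)) (q (i+2)) - s₂) / (p:ℤ))
    (hc2 : (min (q i') (q (i'+1)) - s₂) / (p:ℤ) ≠ (min (q (i'+1)) (q (i'+2)) - s₂) / (p:ℤ)) :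
    False := by
  set μ : ℕ → ℤ := fun e => min (q e) (q (e+1)) with hμ
  have hP1 : 2 ≤ P := by omega
  set B : ℤ := q S with hB
  rcases hε with hε | hε
  · -- ε = 1, up-run
    have hedge : ∀ e, S ≤ e → e + 1 ≤ S + P → μ e = B + (e - S : ℕ) := by
      intro e h1 h2
      obtain ⟨j, rfl⟩ : ∃ j, e = S + j := ⟨e - S, by omega⟩
      have e1 := hrun j (by omega)
      have e2 := hrun (j+1) (by omega)
      rw [hε, one_mul] at e1 e2
      have h3 : S + j + 1 = S + (j + 1) := by omega
      simp only [hμ, h3, e1, e2]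
      have : (j:ℤ) ≤ (j:ℤ) + 1 := by linarith
      rw [min_eq_left (by push_cast; linarith)]
      congr 1
      omega
    -- μ i bounds
    have hiB : B - 1 ≤ μ i ∧ μ i ≤ μ (i+1) := by
      by_cases hiS : S ≤ i
      · have h1 := hedge i hiS (by omega)
        have h2 := hedge (i+1) (by omega) (by omega)
        constructor
        · rw [h1]; have : (0:ℤ) ≤ ((i - S : ℕ) : ℤ) := by positivity
          linarith
        · rw [h1, h2]
          have : ((i - S : ℕ) : ℤ) ≤ ((i + 1 - S : ℕ) : ℤ) := by exact_mod_cast (by omega : i - S ≤ i + 1 - S)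
          linarith
      · -- i = S - 1, S ≥ 1
        have hS1 : 1 ≤ S := by omega
        have hiSe : i + 1 = S := by omega
        have h2 := hedge (i+1) (by omega) (by omega)
        have hq' : q i = B + 1 ∨ q i = B - 1 := by
          rcases hprev with h | h | h
          · omega
          · left; rw [← h]; congr 1; omega
          · right; rw [← h]; congr 1; omega
        have hqi1 : q (i+1) = B := by rw [hiSe]
        constructor
        · simp only [hμ]; rcases hq' with h | h <;> rw [h, hqi1] <;> simp [min_def] <;> split <;> linarith
        · have hμi : μ i ≤ B := by simp only [hμ, hqi1]; exact min_le_right _ _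
          rw [h2]
          have : (0:ℤ) ≤ ((i + 1 - S : ℕ) : ℤ) := by positivity
          linarith
    -- chain
    have hm12 : μ (i+1) ≤ μ i' := by
      have h1 := hedge (i+1) (by omega) (by omega)
      have h2 := hedge i' (by omega) (by omega)
      rw [h1, h2]
      have : ((i + 1 - S : ℕ) : ℤ) ≤ ((i' - S : ℕ) : ℤ) := by exact_mod_cast (by omega : i + 1 - S ≤ i' - S)
      linarith
    have hm34 : μ i' ≤ μ (i'+1) := by
      have h1 := hedge i' (by omega) (by omega)
      have h2 := hedge (i'+1) (by omega) (by omega)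
      rw [h1, h2]
      have : ((i' - S : ℕ) : ℤ) ≤ ((i' + 1 - S : ℕ) : ℤ) := by exact_mod_cast (by omega : i' - S ≤ i' + 1 - S)
      linarith
    have htop : μ (i'+1) ≤ B - 1 + p := by
      have h1 := hedge (i'+1) (by omega) (by omega)
      rw [h1]
      have : ((i' + 1 - S : ℕ) : ℤ) ≤ (p:ℤ) - 1 := by
        have : i' + 1 - S ≤ p - 1 := by omega
        have h2 : ((i' + 1 - S : ℕ) : ℤ) ≤ ((p - 1 : ℕ) : ℤ) := by exact_mod_cast this
        have h3 : ((p - 1 : ℕ) : ℤ) = (p:ℤ) - 1 := by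
          have : (1:ℕ) ≤ p := hp
          push_cast [Nat.cast_sub this]; ring
        linarith
      linarith
    -- cl inequalities
    have c01 : (B - 1 - s₂)/(p:ℤ) ≤ (μ i - s₂)/(p:ℤ) := cl_mono' hp s₂ _ _ hiB.1
    have c12 : (μ i - s₂)/(p:ℤ) ≤ (μ (i+1) - s₂)/(p:ℤ) := cl_mono' hp s₂ _ _ hiB.2
    have c23 : (μ (i+1) - s₂)/(p:ℤ) ≤ (μ i' - s₂)/(p:ℤ) := cl_mono' hp s₂ _ _ hm12
    have c34 : (μ i' - s₂)/(p:ℤ) ≤ (μ (i'+1) - s₂)/(p:ℤ) := cl_mono' hp s₂ _ _ hm34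
    have ctop : (μ (i'+1) - s₂)/(p:ℤ) ≤ (B - 1 - s₂)/(p:ℤ) + 1 := cl_le_one' hp s₂ _ _ htop
    have hc1' : (μ i - s₂)/(p:ℤ) ≠ (μ (i+1) - s₂)/(p:ℤ) := hc1
    have hc2' : (μ i' - s₂)/(p:ℤ) ≠ (μ (i'+1) - s₂)/(p:ℤ) := hc2
    omega
  · -- ε = -1, down-run
    have hedge : ∀ e, S ≤ e → e + 1 ≤ S + P → μ e = B - (e - S : ℕ) - 1 := by
      intro e h1 h2
      obtain ⟨j, rfl⟩ : ∃ j, e = S + j := ⟨e - S, by omega⟩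
      have e1 := hrun j (by omega)
      have e2 := hrun (j+1) (by omega)
      rw [hε] at e1 e2
      have h3 : S + j + 1 = S + (j + 1) := by omega
      simp only [hμ, h3, e1, e2]
      rw [min_eq_right (by push_cast; linarith)]
      push_cast
      have : ((S + j - S : ℕ) : ℤ) = (j:ℤ) := by exact_mod_cast (by omega : S + j - S = j)
      rw [this]; ring
    have hiB : μ i ≤ B ∧ μ (i+1) ≤ μ i := by
      by_cases hiS : S ≤ i
      · have h1 := hedge i hiS (by omega)
        have h2 := hedge (i+1) (by omega) (by omega)
        constructor
        · rw [h1]; have : (0:ℤ) ≤ ((i - S : ℕ) : ℤ) := by positivity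
          linarith
        · rw [h1, h2]
          have : ((i - S : ℕ) : ℤ) ≤ ((i + 1 - S : ℕ) : ℤ) := by exact_mod_cast (by omega : i - S ≤ i + 1 - S)
          linarith
      · have hS1 : 1 ≤ S := by omega
        have hiSe : i + 1 = S := by omega
        have h2 := hedge (i+1) (by omega) (by omega)
        have hq' : q i = B + 1 ∨ q i = B - 1 := by
          rcases hprev with h | h | h
          · omega
          · left; rw [← h]; congr 1; omega
          · right; rw [← h]; congr 1; omega
        have hqi1 : q (i+1) = B := by rw [hiSe]
        constructor
        · simp only [hμ, hqi1]; exact min_le_right _ _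
        · have : μ i ≥ B - 1 := by
            simp only [hμ]; rcases hq' with h | h <;> rw [h, hqi1] <;> simp [min_def] <;> split <;> linarith
          rw [h2]
          have h0 : ((i + 1 - S : ℕ) : ℤ) = 0 := by exact_mod_cast (by omega : i + 1 - S = 0)
          rw [h0]; linarith
    have hm12 : μ i' ≤ μ (i+1) := by
      have h1 := hedge (i+1) (by omega) (by omega)
      have h2 := hedge i' (by omega) (by omega)
      rw [h1, h2]
      have : ((i + 1 - S : ℕ) : ℤ) ≤ ((i' - S : ℕ) : ℤ) := by exact_mod_cast (by omega : i + 1 - S ≤ i' - S)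
      linarith
    have hm34 : μ (i'+1) ≤ μ i' := by
      have h1 := hedge i' (by omega) (by omega)
      have h2 := hedge (i'+1) (by omega) (by omega)
      rw [h1, h2]
      have : ((i' - S : ℕ) : ℤ) ≤ ((i' + 1 - S : ℕ) : ℤ) := by exact_mod_cast (by omega : i' - S ≤ i' + 1 - S)
      linarith
    have hbot : B - p ≤ μ (i'+1) := by
      have h1 := hedge (i'+1) (by omega) (by omega)
      rw [h1]
      have h2 : i' + 1 - S ≤ p - 1 := by omega
      have h3 : ((i' + 1 - S : ℕ) : ℤ) ≤ ((p - 1 : ℕ) : ℤ) := by exact_mod_cast h2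
      have h4 : ((p - 1 : ℕ) : ℤ) = (p:ℤ) - 1 := by
        have : (1:ℕ) ≤ p := hp
        push_cast [Nat.cast_sub this]; ring
      linarith
    have c01 : (μ i - s₂)/(p:ℤ) ≤ (B - s₂)/(p:ℤ) := cl_mono' hp s₂ _ _ hiB.1
    have c12 : (μ (i+1) - s₂)/(p:ℤ) ≤ (μ i - s₂)/(p:ℤ) := cl_mono' hp s₂ _ _ hiB.2
    have c23 : (μ i' - s₂)/(p:ℤ) ≤ (μ (i+1) - s₂)/(p:ℤ) := cl_mono' hp s₂ _ _ hm12
    have c34 : (μ (i'+1) - s₂)/(p:ℤ) ≤ (μ i' - s₂)/(p:ℤ) := cl_mono' hp s₂ _ _ hm34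
    have cbot : (B - s₂)/(p:ℤ) ≤ (μ (i'+1) - s₂)/(p:ℤ) + 1 := by
      apply cl_le_one' hp s₂
      linarith
    have hc1' : (μ i - s₂)/(p:ℤ) ≠ (μ (i+1) - s₂)/(p:ℤ) := hc1
    have hc2' : (μ i' - s₂)/(p:ℤ) ≠ (μ (i'+1) - s₂)/(p:ℤ) := hc2
    omega
private lemma aux_main
    (c : ℝ) (hc : 0 < c) (p : ℕ) (hp : 1 ≤ p)
    (w : ℤ → ℝ) (hw : StrictMono w) (hwp : ∀ i : ℤ, w (i + p) = w i + c)
    (k : ℕ) (s₂ : ℤ) (q₂ : ℕ → ℤ) (hs₂ : q₂ 0 = s₂)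
    (hq₂ : ToursFrom p 0 (k + 2) q₂)
    (f₂ : ℝ → ℝ) (hf₂ : IsWalk w ((k + 2) * p) q₂ f₂)
    (q₁ : ℕ → ℤ) (f₁ : ℝ → ℝ) (N : ℕ) (hNpos : 0 < N)
    (hwalk : IsWalk w N q₁ f₁)
    (hstep : ∀ e, e + 1 ≤ N → q₁ (e+1) = q₁ e + 1 ∨ q₁ (e+1) = q₁ e - 1)
    (blk : ℕ → ℕ)
    (hblkmono : ∀ e e', e ≤ e' → blk e ≤ blk e')
    (hblkbound : ∀ e, e ≤ N - 1 → blk e ≤ k)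
    (hblkgood : ∀ i i', i < i' → i' + 1 ≤ N - 1 → blk (i+1) = blk (i'+1) →
      (min (q₁ i) (q₁ (i+1)) - s₂) / (p:ℤ) ≠ (min (q₁ (i+1)) (q₁ (i+2)) - s₂) / (p:ℤ) →
      (min (q₁ i') (q₁ (i'+1)) - s₂) / (p:ℤ) ≠ (min (q₁ (i'+1)) (q₁ (i'+2)) - s₂) / (p:ℤ) →
      False) :
    ∃ t ∈ Set.Icc (0:ℝ) 1, ∃ m : ℤ, f₁ t - f₂ t = m * c := by
  classical
  by_contra hcon
  push_neg at hcon
  have hp0 : 0 < p := hp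
  obtain ⟨hcont₂, t₂, h20, h21, h2m, h2v, h2seg⟩ := hf₂
  obtain ⟨hcont₁, σ, h10, h11, h1m, h1v, h1seg⟩ := hwalk
  -- monotonicity of t₂
  have h2mono : ∀ a b, a ≤ b → b ≤ (k+2)*p → t₂ a ≤ t₂ b := by
    intro a b hab hb
    have key : ∀ d, a + d ≤ (k+2)*p → t₂ a ≤ t₂ (a + d) := by
      intro d
      induction d with
      | zero => intro _; exact le_refl _
      | succ n ih =>
        intro hd
        refine le_trans (ih (by omega)) ?_
        have := h2m (a + n) (by omega)
        calc t₂ (a + n) ≤ t₂ (a + n + 1) := this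
          _ = t₂ (a + (n+1)) := by ring_nf
    have := key (b - a) (by omega)
    calc t₂ a ≤ t₂ (a + (b - a)) := this
      _ = t₂ b := by congr 1; omega
  have hτmem : ∀ j, j ≤ k+2 → t₂ (j*p) ∈ Set.Icc (0:ℝ) 1 := by
    intro j hj
    constructor
    · rw [← h20]; exact h2mono 0 (j*p) (Nat.zero_le _) (Nat.mul_le_mul_right p hj)
    · rw [← h21]; exact h2mono (j*p) ((k+2)*p) (Nat.mul_le_mul_right p hj) le_rfl
  have hτmono : ∀ j j', j ≤ j' → j' ≤ k+2 → t₂ (j*p) ≤ t₂ (j'*p) :=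
    fun j j' h h' => h2mono (j*p) (j'*p) (Nat.mul_le_mul_right p h) (Nat.mul_le_mul_right p h')
  -- the shift m
  have h0mem : (0:ℝ) ∈ Set.Icc (0:ℝ) 1 := by norm_num
  set g : ℝ → ℝ := fun t => f₁ t - f₂ t with hg
  have hgc : ContinuousOn g (Set.Icc 0 1) := hcont₁.sub hcont₂
  have hne : ∀ t ∈ Set.Icc (0:ℝ) 1, ∀ m : ℤ, g t ≠ m * c := fun t ht m => hcon t ht m
  set m : ℤ := ⌊g 0 / c⌋ with hm
  have hm0 : (m:ℝ) * c ≤ g 0 := by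
    have h := Int.floor_le (g 0 / c)
    rw [le_div_iff₀ hc] at h
    exact h
  have hm1 : g 0 < ((m:ℝ) + 1) * c := by
    have h := Int.lt_floor_add_one (g 0 / c)
    rw [div_lt_iff₀ hc] at h
    rw [← hm] at h
    push_cast
    linarith
  have hm0' : (m:ℝ) * c < g 0 := lt_of_le_of_ne hm0 (fun h => hne 0 h0mem m h.symm)
  have hmall : ∀ t ∈ Set.Icc (0:ℝ) 1, (m:ℝ) * c < g t ∧ g t < (m:ℝ) * c + c := by
    intro t ht
    constructor
    · by_contra h
      push_neg at h
      have hlt : g t < m * c := lt_of_le_of_ne h (hne t ht m)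
      have hsub : Set.Icc (0:ℝ) t ⊆ Set.Icc 0 1 := Set.Icc_subset_Icc le_rfl ht.2
      have himg := intermediate_value_Icc' ht.1 (hgc.mono hsub)
      have : (m:ℝ) * c ∈ Set.Icc (g t) (g 0) := ⟨le_of_lt hlt, hm0⟩
      obtain ⟨s, hs, hgs⟩ := himg this
      exact hne s (hsub hs) m hgs
    · by_contra h
      push_neg at h
      have hlt : ((m:ℝ) + 1) * c < g t := by
        have hne' : g t ≠ ((m + 1 : ℤ) : ℝ) * c := hne t ht (m+1)
        have : g t ≠ ((m:ℝ) + 1) * c := by push_cast at hne' ⊢; exact hne'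
        cases lt_or_eq_of_le (by linarith : ((m:ℝ) + 1) * c ≤ g t) with
        | inl hh => exact hh
        | inr hh => exact absurd hh.symm this
      have hsub : Set.Icc (0:ℝ) t ⊆ Set.Icc 0 1 := Set.Icc_subset_Icc le_rfl ht.2
      have himg := intermediate_value_Icc ht.1 (hgc.mono hsub)
      have : ((m:ℝ) + 1) * c ∈ Set.Icc (g 0) (g t) := ⟨by linarith, le_of_lt hlt⟩
      obtain ⟨s, hs, hgs⟩ := himg this
      refine hne s (hsub hs) (m+1) ?_
      push_cast
      exact hgs
  -- structure of f₂'s route at tour boundaries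
  have hq₂step : ∀ j, j < k+2 → q₂ ((j+1)*p) = q₂ (j*p) + p ∨ q₂ ((j+1)*p) = q₂ (j*p) - p := by
    intro j hj
    obtain ⟨ε, hε, he⟩ := hq₂ j hj
    have h1 := he p le_rfl
    simp only [Nat.zero_add] at h1
    have h2 : (j+1)*p = j*p + p := by ring
    rw [h2]
    rcases hε with hε | hε
    · left; rw [h1, hε]; ring
    · right; rw [h1, hε]; ring
  have hdvd : ∀ j, j ≤ k+2 → (p:ℤ) ∣ q₂ (j*p) - s₂ := by
    intro j
    induction j with
    | zero => intro _; simp [hs₂]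
    | succ n ih =>
      intro hj
      have h1 := ih (by omega)
      rcases hq₂step n (by omega) with h | h
      · rw [h]; have : q₂ (n*p) + p - s₂ = (q₂ (n*p) - s₂) + 1 * p := by ring
        rw [this]; exact dvd_add h1 ⟨1, by ring⟩
      · rw [h]; have : q₂ (n*p) - p - s₂ = (q₂ (n*p) - s₂) + (-1) * p := by ring
        rw [this]; exact dvd_add h1 ⟨-1, by ring⟩
  set D : ℕ → ℤ := fun j => (q₂ (j*p) - s₂) / (p:ℤ) with hD
  have hp0' : (p:ℤ) ≠ 0 := by exact_mod_cast hp0.ne'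
  have hDstep : ∀ j, j < k+2 → D (j+1) = D j + 1 ∨ D (j+1) = D j - 1 := by
    intro j hj
    rcases hq₂step j hj with h | h
    · left
      simp only [hD]
      rw [h]
      have : q₂ (j*p) + (p:ℤ) - s₂ = (q₂ (j*p) - s₂) + 1 * p := by ring
      rw [this, Int.add_mul_ediv_right _ _ hp0']
    · right
      simp only [hD]
      rw [h]
      have : q₂ (j*p) - (p:ℤ) - s₂ = (q₂ (j*p) - s₂) + (-1) * p := by ring
      rw [this, Int.add_mul_ediv_right _ _ hp0']
      ring
  -- the index selection
  set Iq : ℕ → ℕ := fun j => Nat.findGreatest (fun i => σ i ≤ t₂ (j*p)) (N - 1) with hIq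
  have hIle : ∀ j, Iq j ≤ N - 1 := fun j => Nat.findGreatest_le (N-1)
  have hI1 : ∀ j, j ≤ k+2 → σ (Iq j) ≤ t₂ (j*p) := by
    intro j hj
    exact Nat.findGreatest_spec (P := fun i => σ i ≤ t₂ (j*p)) (Nat.zero_le _)
      (by show σ 0 ≤ t₂ (j*p); rw [h10]; exact (hτmem j hj).1)
  have hI2 : ∀ j, j ≤ k+2 → t₂ (j*p) ≤ σ (Iq j + 1) := by
    intro j hj
    by_cases h : Iq j + 1 ≤ N - 1
    · have := Nat.findGreatest_is_greatest (Nat.lt_succ_self (Iq j)) h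
      exact le_of_not_ge this
    · have hIN : Iq j + 1 = N := by have := hIle j; omega
      rw [hIN, h11]
      exact (hτmem j hj).2
  have hImono : ∀ j j', j ≤ j' → j' ≤ k+2 → Iq j ≤ Iq j' := by
    intro j j' hjj hj'
    exact Nat.le_findGreatest (hIle j) (le_trans (hI1 j (by omega)) (hτmono j j' hjj hj'))
  -- cells at tour boundaries
  set F : ℕ → ℤ := fun e => (min (q₁ e) (q₁ (e+1)) - s₂) / (p:ℤ) with hF
  have hFI : ∀ j, j ≤ k+2 → F (Iq j) = D j + m := by
    intro j hj
    have hIN : Iq j < N := by have := hIle j; omega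
    have hseg := h1seg (Iq j) hIN (t₂ (j*p)) ⟨hI1 j hj, hI2 j hj⟩
    have hf2v : f₂ (t₂ (j*p)) = w (q₂ (j*p)) := h2v (j*p) (Nat.mul_le_mul_right p hj)
    have hbd := hmall (t₂ (j*p)) (hτmem j hj)
    set x := f₁ (t₂ (j*p)) with hx
    set V : ℤ := q₂ (j*p) + m * p with hV
    have hlow : w V < x := by
      have : w V = w (q₂ (j*p)) + m * c := w_add_mul w hwp m (q₂ (j*p))
      rw [this, ← hf2v]
      have := hbd.1
      simp only [hg] at this
      linarith
    have hhigh : x < w (V + p) := by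
      have h1 : V + (p:ℤ) = q₂ (j*p) + (m+1) * p := by ring
      have h2 : w (q₂ (j*p) + (m+1) * p) = w (q₂ (j*p)) + ((m:ℝ)+1) * c := by
        have h2' := w_add_mul w hwp (m+1) (q₂ (j*p))
        push_cast at h2'
        exact h2'
      rw [h1, h2, ← hf2v]
      have := hbd.2
      simp only [hg] at this
      push_cast
      linarith
    -- edge containment
    have hstep' := hstep (Iq j) (by omega)
    have hmin : V ≤ min (q₁ (Iq j)) (q₁ (Iq j + 1)) ∧ min (q₁ (Iq j)) (q₁ (Iq j + 1)) < V + p := by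
      rcases hstep' with h | h
      · have hmm : min (q₁ (Iq j)) (q₁ (Iq j + 1)) = q₁ (Iq j) := min_eq_left (by rw [h]; linarith)
        rw [hmm]
        have huIcc : Set.uIcc (w (q₁ (Iq j))) (w (q₁ (Iq j + 1))) = Set.Icc (w (q₁ (Iq j))) (w (q₁ (Iq j + 1))) :=
          Set.uIcc_of_le (hw.monotone (by rw [h]; linarith))
        rw [huIcc] at hseg
        constructor
        · have : w V < w (q₁ (Iq j) + 1) := by rw [← h]; exact lt_of_lt_of_le hlow hseg.2
          have := hw.lt_iff_lt.mp this
          omega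
        · have : w (q₁ (Iq j)) < w (V + p) := lt_of_le_of_lt hseg.1 hhigh
          exact hw.lt_iff_lt.mp this
      · have hmm : min (q₁ (Iq j)) (q₁ (Iq j + 1)) = q₁ (Iq j + 1) := min_eq_right (by rw [h]; linarith)
        rw [hmm]
        have huIcc : Set.uIcc (w (q₁ (Iq j))) (w (q₁ (Iq j + 1))) = Set.Icc (w (q₁ (Iq j + 1))) (w (q₁ (Iq j))) := by
          rw [Set.uIcc_comm]
          exact Set.uIcc_of_le (hw.monotone (by rw [h]; linarith))
        rw [huIcc] at hseg
        constructor
        · have : w V < w (q₁ (Iq j) ) := lt_of_lt_of_le hlow hseg.2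
          have h2 := hw.lt_iff_lt.mp this
          rw [h]; omega
        · have : w (q₁ (Iq j + 1)) < w (V + p) := lt_of_le_of_lt hseg.1 hhigh
          exact hw.lt_iff_lt.mp this
    have hdV : (p:ℤ) ∣ V - s₂ := by
      rw [hV]
      have : q₂ (j*p) + m * p - s₂ = (q₂ (j*p) - s₂) + m * p := by ring
      rw [this]
      exact dvd_add (hdvd j hj) ⟨m, by ring⟩
    have := cl_lattice' hp0 s₂ V _ hdV hmin.1 hmin.2
    simp only [hF]
    rw [this, hV]
    have h3 : q₂ (j*p) + m * (p:ℤ) - s₂ = (q₂ (j*p) - s₂) + m * p := by ring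
    rw [h3, Int.add_mul_ediv_right _ _ hp0']
  -- extract changes
  have hex : ∀ j, ∃ ι, j < k+2 → Iq j ≤ ι ∧ ι < Iq (j+1) ∧ F ι ≠ F (ι+1) := by
    intro j
    by_cases hj : j < k+2
    · have hne' : F (Iq j) ≠ F (Iq (j+1)) := by
        rw [hFI j (by omega), hFI (j+1) (by omega)]
        rcases hDstep j hj with h | h <;> omega
      obtain ⟨ι, hι1, hι2, hι3⟩ := exists_change F (Iq j) (Iq (j+1)) (hImono j (j+1) (by omega) (by omega)) hne'
      exact ⟨ι, fun _ => ⟨hι1, hι2, hι3⟩⟩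
    · exact ⟨0, fun h => absurd h hj⟩
  choose ι hι using hex
  have hιlt : ∀ j, j + 1 < k+2 → ι j < ι (j+1) := by
    intro j hj
    have h1 := (hι j (by omega)).2.1
    have h2 := (hι (j+1) hj).1
    omega
  have hιbd : ∀ j, j < k+2 → ι j + 1 ≤ N - 1 := by
    intro j hj
    have h1 := (hι j hj).2.1
    have h2 := hIle (j+1)
    omega
  have hclaim : ∀ j, j < k+2 → j ≤ blk (ι j + 1) := by
    intro j
    induction j with
    | zero => intro _; exact Nat.zero_le _
    | succ n ih =>
      intro hj
      have h1 := ih (by omega)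
      have hlt := hιlt n hj
      have h2 := hblkmono (ι n + 1) (ι (n+1) + 1) (by omega)
      rcases lt_or_eq_of_le h2 with h | h
      · omega
      · exfalso
        exact hblkgood (ι n) (ι (n+1)) hlt (hιbd (n+1) hj) h ((hι n (by omega)).2.2) ((hι (n+1) hj).2.2)
  have hfin := hclaim (k+1) (by omega)
  have hlast := hblkbound (ι (k+1) + 1) (hιbd (k+1) (by omega))
  omega
private lemma nat_divmod (x p : ℕ) (hp : 0 < p) : ∃ j r, x = j * p + r ∧ r < p ∧ x / p = j :=
  ⟨x/p, x%p, by rw [Nat.mul_comm]; exact (Nat.div_add_mod x p).symm, Nat.mod_lt _ hp, rfl⟩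

private lemma nat_lt_of_mul (j k' p : ℕ) (h : j * p < k' * p) : j < k' := by
  have h2 : p * j < p * k' := by rw [Nat.mul_comm p j, Nat.mul_comm p k']; exact h
  exact Nat.lt_of_mul_lt_mul_left h2

/-- **Lemma 3.2.** On a cycle with `p ≥ 1` vertices and circumference `c > 0`, let `f₂` be
a walk of a route which is the concatenation of `k + 2` tours starting at vertex index
`s₂` (each tour in an arbitrary direction, starting where the previous tour ended), and
let `f₁` be a walk of a route which is either a partial tour (a monotone route of at most
`p` steps) followed by at most `k` tours, or at most `k` tours followed by a partial tour.
Then the two walks meet: `f₁ t - f₂ t ∈ cℤ` for some `t ∈ [0,1]`. -/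
theorem rendezvous_tours_vs_fewer_tours
    (c : ℝ) (hc : 0 < c) (p : ℕ) (hp : 1 ≤ p)
    (w : ℤ → ℝ) (hw : StrictMono w) (hwp : ∀ i : ℤ, w (i + p) = w i + c)
    (k : ℕ) (s₂ : ℤ) (q₂ : ℕ → ℤ) (hs₂ : q₂ 0 = s₂)
    (hq₂ : ToursFrom p 0 (k + 2) q₂)
    (f₂ : ℝ → ℝ) (hf₂ : IsWalk w ((k + 2) * p) q₂ f₂)
    (q₁ : ℕ → ℤ) (f₁ : ℝ → ℝ)
    (h₁ : (∃ M k', M ≤ p ∧ k' ≤ k ∧ MonotoneRouteFrom 0 M q₁ ∧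
            ToursFrom p M k' q₁ ∧ IsWalk w (M + k' * p) q₁ f₁) ∨
          (∃ M k', M ≤ p ∧ k' ≤ k ∧ ToursFrom p 0 k' q₁ ∧
            MonotoneRouteFrom (k' * p) M q₁ ∧ IsWalk w (k' * p + M) q₁ f₁)) :
    ∃ t ∈ Set.Icc (0 : ℝ) 1, ∃ m : ℤ, f₁ t - f₂ t = m * c := by
  have hp0 : 0 < p := hp
  rcases h₁ with ⟨M, k', hM, hk', hmono, htours, hwalk⟩ | ⟨M, k', hM, hk', htours, hmono, hwalk⟩
  · -- Case A: partial tour then k' tours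
    have hNpos : 0 < M + k' * p := by
      rcases Nat.eq_zero_or_pos (M + k' * p) with h | h
      · exfalso
        obtain ⟨_, t, ht0, ht1, _⟩ := hwalk
        rw [h, ht0] at ht1
        norm_num at ht1
      · exact h
    obtain ⟨ε₀, hε₀, hf0⟩ := hmono
    have hf0' : ∀ i, i ≤ M → q₁ i = q₁ 0 + ε₀ * i := by
      intro i hi; simpa using hf0 i hi
    have hstep : ∀ e, e + 1 ≤ M + k' * p → q₁ (e+1) = q₁ e + 1 ∨ q₁ (e+1) = q₁ e - 1 := by
      intro e he
      by_cases heM : e < M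
      · have h1 := hf0' e (by omega)
        have h2 := hf0' (e+1) (by omega)
        rcases hε₀ with h | h
        · left; rw [h] at h1 h2; push_cast at h1 h2; omega
        · right; rw [h] at h1 h2; push_cast at h1 h2; omega
      · obtain ⟨j, r, hjr, hrp, hjd⟩ := nat_divmod (e - M) p hp0
        have hjk : j < k' := by
          refine nat_lt_of_mul j k' p ?_
          omega
        obtain ⟨ε, hε, hf⟩ := htours j hjk
        have h1 := hf r (by omega)
        have h2 := hf (r+1) (by omega)
        have hidx : M + j * p + r = e := by omega
        have hidx2 : M + j * p + (r+1) = e + 1 := by omega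
        rw [hidx] at h1
        rw [hidx2] at h2
        rcases hε with h | h
        · left; rw [h] at h1 h2; push_cast at h1 h2; omega
        · right; rw [h] at h1 h2; push_cast at h1 h2; omega
    set blk : ℕ → ℕ := fun e => if e < M then 0 else (e - M)/p + 1 with hblk
    have hblt : ∀ e, e < M → blk e = 0 := by intro e h; simp [hblk, h]
    have hbge : ∀ e, M ≤ e → blk e = (e - M)/p + 1 := by
      intro e h; simp [hblk]; omega
    have hblkmono : ∀ e e', e ≤ e' → blk e ≤ blk e' := by
      intro e e' h
      by_cases h1 : e < M
      · rw [hblt e h1]; exact Nat.zero_le _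
      · have h2 : M ≤ e' := by omega
        rw [hbge e (by omega), hbge e' h2]
        have := Nat.div_le_div_right (c := p) (by omega : e - M ≤ e' - M)
        omega
    have hblkbound : ∀ e, e ≤ M + k' * p - 1 → blk e ≤ k := by
      intro e he
      by_cases h1 : e < M
      · rw [hblt e h1]; exact Nat.zero_le _
      · obtain ⟨j, r, hjr, hrp, hjd⟩ := nat_divmod (e - M) p hp0
        rw [hbge e (by omega), hjd]
        have hjk : j < k' := by
          refine nat_lt_of_mul j k' p ?_
          omega
        omega
    have hblkgood : ∀ i i', i < i' → i' + 1 ≤ M + k' * p - 1 → blk (i+1) = blk (i'+1) →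
        (min (q₁ i) (q₁ (i+1)) - s₂) / (p:ℤ) ≠ (min (q₁ (i+1)) (q₁ (i+2)) - s₂) / (p:ℤ) →
        (min (q₁ i') (q₁ (i'+1)) - s₂) / (p:ℤ) ≠ (min (q₁ (i'+1)) (q₁ (i'+2)) - s₂) / (p:ℤ) →
        False := by
      intro i i' hii hbN heq hc1 hc2
      by_cases hiM : i + 1 < M
      · have hz : blk (i'+1) = 0 := by rw [← heq, hblt _ hiM]
        have hi'M : i' + 1 < M := by
          by_contra hcc
          obtain ⟨j2, r2, hjr2, hrp2, hjd2⟩ := nat_divmod (i'+1 - M) p hp0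
          rw [hbge (i'+1) (by omega), hjd2] at hz
          omega
        exact block_bound hp0 s₂ q₁ 0 M hM ε₀ hε₀ hf0 (Or.inl rfl) i i' (Nat.zero_le _) hii
          (by omega) hc1 hc2
      · have hiM' : M ≤ i + 1 := by omega
        have hi'M : M ≤ i' + 1 := by omega
        obtain ⟨j, r, hjr, hrp, hjd⟩ := nat_divmod (i+1 - M) p hp0
        obtain ⟨j2, r2, hjr2, hrp2, hjd2⟩ := nat_divmod (i'+1 - M) p hp0
        have heq' : j = j2 := by
          rw [hbge _ hiM', hbge _ hi'M, hjd, hjd2] at heq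
          omega
        subst heq'
        have hjk : j < k' := by
          refine nat_lt_of_mul j k' p ?_
          omega
        obtain ⟨ε, hε, hf⟩ := htours j hjk
        have hprev : M + j*p = 0 ∨ q₁ (M + j*p - 1) = q₁ (M + j*p) + 1 ∨
            q₁ (M + j*p - 1) = q₁ (M + j*p) - 1 := by
          by_cases hS : M + j*p = 0
          · exact Or.inl hS
          · right
            rcases Nat.eq_zero_or_pos j with hj0 | hjpos
            · have hM1 : 1 ≤ M := by
                rw [hj0] at hS
                omega
              have h1 := hf0' (M-1) (by omega)
              have h2 := hf0' M le_rfl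
              have hidx : M + j*p - 1 = M - 1 := by rw [hj0]; omega
              have hidx2 : M + j*p = M := by rw [hj0]; omega
              rw [hidx, hidx2, h1, h2]
              have hcast : ((M - 1 : ℕ) : ℤ) = (M:ℤ) - 1 := by
                push_cast [Nat.cast_sub hM1]; ring
              rcases hε₀ with h | h
              · right; rw [h, hcast]; ring
              · left; rw [h, hcast]; ring
            · obtain ⟨j'', rfl⟩ : ∃ j'', j = j'' + 1 := ⟨j - 1, by omega⟩
              obtain ⟨ε', hε', hf''⟩ := htours j'' (by omega)
              have h1 := hf'' (p-1) (by omega)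
              have h2 := hf'' p le_rfl
              have hexp : (j''+1)*p = j''*p + p := by ring
              have hidx : M + j''*p + (p-1) = M + (j''+1)*p - 1 := by omega
              have hidx2 : M + j''*p + p = M + (j''+1)*p := by omega
              rw [hidx] at h1
              rw [hidx2] at h2
              have hcast : ((p - 1 : ℕ) : ℤ) = (p:ℤ) - 1 := by
                push_cast [Nat.cast_sub hp]; ring
              rw [hcast] at h1
              rcases hε' with h | h
              · right; rw [h] at h1 h2; push_cast at h1 h2; omega
              · left; rw [h] at h1 h2; push_cast at h1 h2; omega
        have hwin1 : M + j*p ≤ i + 1 := by omega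
        have hwin2 : i' + 1 ≤ M + j*p + p - 1 := by omega
        exact block_bound hp0 s₂ q₁ (M + j*p) p le_rfl ε hε hf hprev i i' hwin1 hii hwin2 hc1 hc2
    exact aux_main c hc p hp w hw hwp k s₂ q₂ hs₂ hq₂ f₂ hf₂ q₁ f₁ (M + k'*p) hNpos hwalk hstep blk
      hblkmono hblkbound hblkgood
  · -- Case B: k' tours then partial tour
    have hNpos : 0 < k' * p + M := by
      rcases Nat.eq_zero_or_pos (k' * p + M) with h | h
      · exfalso
        obtain ⟨_, t, ht0, ht1, _⟩ := hwalk
        rw [h, ht0] at ht1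
        norm_num at ht1
      · exact h
    obtain ⟨ε₀, hε₀, hf0⟩ := hmono
    have hstep : ∀ e, e + 1 ≤ k' * p + M → q₁ (e+1) = q₁ e + 1 ∨ q₁ (e+1) = q₁ e - 1 := by
      intro e he
      by_cases heK : e < k' * p
      · obtain ⟨j, r, hjr, hrp, hjd⟩ := nat_divmod e p hp0
        have hjk : j < k' := by
          refine nat_lt_of_mul j k' p ?_
          omega
        obtain ⟨ε, hε, hf⟩ := htours j hjk
        have h1 := hf r (by omega)
        have h2 := hf (r+1) (by omega)
        have hidx : 0 + j * p + r = e := by omega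
        have hidx2 : 0 + j * p + (r+1) = e + 1 := by omega
        rw [hidx] at h1
        rw [hidx2] at h2
        rcases hε with h | h
        · left; rw [h] at h1 h2; push_cast at h1 h2; omega
        · right; rw [h] at h1 h2; push_cast at h1 h2; omega
      · have h1 := hf0 (e - k'*p) (by omega)
        have h2 := hf0 (e - k'*p + 1) (by omega)
        have hidx : k'*p + (e - k'*p) = e := by omega
        have hidx2 : k'*p + (e - k'*p + 1) = e + 1 := by omega
        rw [hidx] at h1
        rw [hidx2] at h2
        rcases hε₀ with h | h
        · left; rw [h] at h1 h2; push_cast at h1 h2; omega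
        · right; rw [h] at h1 h2; push_cast at h1 h2; omega
    set blk : ℕ → ℕ := fun e => if e < k' * p then e/p else k' with hblk
    have hblt : ∀ e, e < k' * p → blk e = e/p := by intro e h; simp [hblk, h]
    have hbge : ∀ e, k' * p ≤ e → blk e = k' := by
      intro e h; simp [hblk]; omega
    have hdivlt : ∀ e, e < k' * p → e / p < k' := by
      intro e h
      obtain ⟨j, r, hjr, hrp, hjd⟩ := nat_divmod e p hp0
      rw [hjd]
      refine nat_lt_of_mul j k' p ?_
      omega
    have hblkmono : ∀ e e', e ≤ e' → blk e ≤ blk e' := by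
      intro e e' h
      by_cases h1 : e < k' * p
      · by_cases h2 : e' < k' * p
        · rw [hblt e h1, hblt e' h2]
          exact Nat.div_le_div_right h
        · rw [hblt e h1, hbge e' (by omega)]
          exact le_of_lt (hdivlt e h1)
      · rw [hbge e (by omega), hbge e' (by omega)]
    have hblkbound : ∀ e, e ≤ k' * p + M - 1 → blk e ≤ k := by
      intro e _
      by_cases h1 : e < k' * p
      · rw [hblt e h1]; exact le_trans (le_of_lt (hdivlt e h1)) hk'
      · rw [hbge e (by omega)]; exact hk'
    have hblkgood : ∀ i i', i < i' → i' + 1 ≤ k' * p + M - 1 → blk (i+1) = blk (i'+1) →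
        (min (q₁ i) (q₁ (i+1)) - s₂) / (p:ℤ) ≠ (min (q₁ (i+1)) (q₁ (i+2)) - s₂) / (p:ℤ) →
        (min (q₁ i') (q₁ (i'+1)) - s₂) / (p:ℤ) ≠ (min (q₁ (i'+1)) (q₁ (i'+2)) - s₂) / (p:ℤ) →
        False := by
      intro i i' hii hbN heq hc1 hc2
      by_cases hiK : i + 1 < k' * p
      · obtain ⟨j, r, hjr, hrp, hjd⟩ := nat_divmod (i+1) p hp0
        have hjk : j < k' := by
          refine nat_lt_of_mul j k' p ?_
          omega
        have hi'K : i' + 1 < k' * p := by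
          by_contra hcc
          rw [hblt _ hiK, hjd, hbge _ (by omega)] at heq
          omega
        obtain ⟨j2, r2, hjr2, hrp2, hjd2⟩ := nat_divmod (i'+1) p hp0
        have heq' : j = j2 := by
          rw [hblt _ hiK, hblt _ hi'K, hjd, hjd2] at heq
          omega
        subst heq'
        obtain ⟨ε, hε, hf⟩ := htours j hjk
        have hf' : ∀ i, i ≤ p → q₁ (j*p + i) = q₁ (j*p) + ε * i := by
          intro i hi; simpa using hf i hi
        have hprev : j*p = 0 ∨ q₁ (j*p - 1) = q₁ (j*p) + 1 ∨ q₁ (j*p - 1) = q₁ (j*p) - 1 := by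
          rcases Nat.eq_zero_or_pos j with hj0 | hjpos
          · left; rw [hj0]; omega
          · right
            obtain ⟨j'', rfl⟩ : ∃ j'', j = j'' + 1 := ⟨j - 1, by omega⟩
            obtain ⟨ε', hε', hf''⟩ := htours j'' (by omega)
            have h1 := hf'' (p-1) (by omega)
            have h2 := hf'' p le_rfl
            have hexp : (j''+1)*p = j''*p + p := by ring
            have hidx : 0 + j''*p + (p-1) = (j''+1)*p - 1 := by omega
            have hidx2 : 0 + j''*p + p = (j''+1)*p := by omega
            rw [hidx] at h1
            rw [hidx2] at h2
            have hcast : ((p - 1 : ℕ) : ℤ) = (p:ℤ) - 1 := by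
              push_cast [Nat.cast_sub hp]; ring
            rw [hcast] at h1
            rcases hε' with h | h
            · right; rw [h] at h1 h2; push_cast at h1 h2; omega
            · left; rw [h] at h1 h2; push_cast at h1 h2; omega
        have hwin1 : j*p ≤ i + 1 := by omega
        have hwin2 : i' + 1 ≤ j*p + p - 1 := by omega
        exact block_bound hp0 s₂ q₁ (j*p) p le_rfl ε hε hf' hprev i i' hwin1 hii hwin2 hc1 hc2
      · have hiK' : k' * p ≤ i + 1 := by omega
        have hi'K : k' * p ≤ i' + 1 := by omega
        have hprev : k'*p = 0 ∨ q₁ (k'*p - 1) = q₁ (k'*p) + 1 ∨ q₁ (k'*p - 1) = q₁ (k'*p) - 1 := by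
          rcases Nat.eq_zero_or_pos k' with hk0 | hkpos
          · left; rw [hk0]; omega
          · right
            obtain ⟨k'', rfl⟩ : ∃ k'', k' = k'' + 1 := ⟨k' - 1, by omega⟩
            obtain ⟨ε', hε', hf''⟩ := htours k'' (by omega)
            have h1 := hf'' (p-1) (by omega)
            have h2 := hf'' p le_rfl
            have hexp : (k''+1)*p = k''*p + p := by ring
            have hidx : 0 + k''*p + (p-1) = (k''+1)*p - 1 := by omega
            have hidx2 : 0 + k''*p + p = (k''+1)*p := by omega
            rw [hidx] at h1
            rw [hidx2] at h2
            have hcast : ((p - 1 : ℕ) : ℤ) = (p:ℤ) - 1 := by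
              push_cast [Nat.cast_sub hp]; ring
            rw [hcast] at h1
            rcases hε' with h | h
            · right; rw [h] at h1 h2; push_cast at h1 h2; omega
            · left; rw [h] at h1 h2; push_cast at h1 h2; omega
        have hwin2 : i' + 1 ≤ k'*p + M - 1 := hbN
        exact block_bound hp0 s₂ q₁ (k'*p) M hM ε₀ hε₀ hf0 hprev i i' hiK' hii hwin2 hc1 hc2
    exact aux_main c hc p hp w hw hwp k s₂ q₂ hs₂ hq₂ f₂ hf₂ q₁ f₁ (k'*p + M) hNpos hwalk hstep blk
      hblkmono hblkbound hblkgood
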